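/- arXiv:2601.01228 — 2 statements merged into one kernel-verified Lean document; each statement's English description precedes it below -/
import Mathlib

section
/- Let A : ℝⁿ → ℝᵐ be linear, y ∈ ℝᵐ, s ∈ [0, 1/‖A‖²], λ ∈ (0,1), D : ℝⁿ → ℝⁿ a contraction with constant L < 1, and Ω : ℝⁿ → ℝⁿ nonexpansive. Then the map T(x) = Ω(λ·D(G(x)) + (1-λ)·G(x)), where G(x) = x - 2s·Aᵀ(Ax - y), is a contraction and hence has a unique fixed point x* ∈ ℝⁿ. -/
set_option maxHeartbeats 800000


theorem stmt4 {n m : ℕ}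
    (A : EuclideanSpace ℝ (Fin n) →L[ℝ] EuclideanSpace ℝ (Fin m))
    (y : EuclideanSpace ℝ (Fin m))
    (s : ℝ) (hs : s ∈ Set.Icc (0 : ℝ) (1 / ‖A‖ ^ 2))
    (lam : ℝ) (hlam : lam ∈ Set.Ioo (0 : ℝ) 1)
    (D : EuclideanSpace ℝ (Fin n) → EuclideanSpace ℝ (Fin n))
    (L : ℝ) (hL0 : 0 ≤ L) (hL : L < 1)
    (hD : ∀ x z, ‖D x - D z‖ ≤ L * ‖x - z‖)
    (Ω : EuclideanSpace ℝ (Fin n) → EuclideanSpace ℝ (Fin n))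
    (hΩ : ∀ x z, ‖Ω x - Ω z‖ ≤ ‖x - z‖)
    (G T : EuclideanSpace ℝ (Fin n) → EuclideanSpace ℝ (Fin n))
    (hG : ∀ x, G x = x - (2 * s) • (ContinuousLinearMap.adjoint A) (A x - y))
    (hT : ∀ x, T x = Ω (lam • D (G x) + (1 - lam) • G x)) :
    (∃ c : ℝ, c < 1 ∧ ∀ x z, ‖T x - T z‖ ≤ c * ‖x - z‖) ∧
    (∃! xstar : EuclideanSpace ℝ (Fin n), T xstar = xstar) := by
  obtain ⟨hs0, hs1⟩ := hs
  obtain ⟨hl0, hl1⟩ := hlam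
  have hsA : s * ‖A‖ ^ 2 ≤ 1 := by
    rcases eq_or_lt_of_le (sq_nonneg ‖A‖) with h | h
    · rw [← h]; simp
    · exact (le_div_iff₀ h).mp hs1
  -- G is nonexpansive
  have hGne : ∀ x z, ‖G x - G z‖ ≤ ‖x - z‖ := by
    intro x z
    set v := x - z with hv
    have hGd : G x - G z = v - (2 * s) • (ContinuousLinearMap.adjoint A) (A v) := by
      rw [hG, hG]
      have h : (ContinuousLinearMap.adjoint A) (A x - y) - (ContinuousLinearMap.adjoint A) (A z - y)
          = (ContinuousLinearMap.adjoint A) (A v) := by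
        rw [← map_sub]
        congr 1
        rw [hv, map_sub]
        abel
      rw [hv, ← h, smul_sub]
      abel
    have hsq : ‖G x - G z‖ ^ 2 ≤ ‖v‖ ^ 2 := by
      rw [hGd]
      have hexp : ‖v - (2 * s) • (ContinuousLinearMap.adjoint A) (A v)‖ ^ 2
          = ‖v‖ ^ 2 - 2 * inner ℝ v ((2 * s) • (ContinuousLinearMap.adjoint A) (A v))
            + ‖(2 * s) • (ContinuousLinearMap.adjoint A) (A v)‖ ^ 2 := by
        exact norm_sub_sq_real _ _
      rw [hexp]
      have h1 : inner ℝ v ((2 * s) • (ContinuousLinearMap.adjoint A) (A v))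
          = (2 * s) * ‖A v‖ ^ 2 := by
        rw [real_inner_smul_right, real_inner_comm,
          ContinuousLinearMap.adjoint_inner_left, real_inner_self_eq_norm_sq]
      have h2 : ‖(2 * s) • (ContinuousLinearMap.adjoint A) (A v)‖ ^ 2
          ≤ (2 * s) ^ 2 * (‖A‖ ^ 2 * ‖A v‖ ^ 2) := by
        rw [norm_smul]
        have hb : ‖(ContinuousLinearMap.adjoint A) (A v)‖ ≤ ‖A‖ * ‖A v‖ := by
          calc ‖(ContinuousLinearMap.adjoint A) (A v)‖
              ≤ ‖ContinuousLinearMap.adjoint A‖ * ‖A v‖ :=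
                (ContinuousLinearMap.adjoint A).le_opNorm _
            _ = ‖A‖ * ‖A v‖ := by rw [ContinuousLinearMap.adjoint.norm_map A]
        have := mul_le_mul_of_nonneg_left hb (norm_nonneg ((2 * s : ℝ)))
        calc (‖(2 * s : ℝ)‖ * ‖(ContinuousLinearMap.adjoint A) (A v)‖) ^ 2
            ≤ (‖(2 * s : ℝ)‖ * (‖A‖ * ‖A v‖)) ^ 2 := by
              apply pow_le_pow_left₀ (by positivity) this
          _ = (2 * s) ^ 2 * (‖A‖ ^ 2 * ‖A v‖ ^ 2) := by
              rw [Real.norm_eq_abs, ← sq_abs (2 * s)]; ring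
      rw [h1]
      have key : (2 * s) ^ 2 * (‖A‖ ^ 2 * ‖A v‖ ^ 2) ≤ 2 * ((2 * s) * ‖A v‖ ^ 2) := by
        have h4 : (2 * s) ^ 2 * (‖A‖ ^ 2 * ‖A v‖ ^ 2) = (2 * s) * (s * ‖A‖ ^ 2) * (2 * ‖A v‖ ^ 2) := by ring
        rw [h4]
        have : (2 * s) * (s * ‖A‖ ^ 2) ≤ (2 * s) * 1 :=
          mul_le_mul_of_nonneg_left hsA (by linarith)
        nlinarith [sq_nonneg ‖A v‖]
      linarith
    have h0 : (0:ℝ) ≤ ‖v‖ := norm_nonneg _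
    nlinarith [norm_nonneg (G x - G z)]
  -- T is a contraction with constant c
  set c : ℝ := lam * L + (1 - lam) with hc
  have hc0 : 0 ≤ c := by nlinarith
  have hc1 : c < 1 := by nlinarith
  have hTc : ∀ x z, ‖T x - T z‖ ≤ c * ‖x - z‖ := by
    intro x z
    rw [hT, hT]
    calc ‖Ω (lam • D (G x) + (1 - lam) • G x) - Ω (lam • D (G z) + (1 - lam) • G z)‖
        ≤ ‖(lam • D (G x) + (1 - lam) • G x) - (lam • D (G z) + (1 - lam) • G z)‖ := hΩ _ _
      _ = ‖lam • (D (G x) - D (G z)) + (1 - lam) • (G x - G z)‖ := by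
          rw [smul_sub, smul_sub]; ring_nf; abel_nf
      _ ≤ ‖lam • (D (G x) - D (G z))‖ + ‖(1 - lam) • (G x - G z)‖ := norm_add_le _ _
      _ = lam * ‖D (G x) - D (G z)‖ + (1 - lam) * ‖G x - G z‖ := by
          rw [norm_smul, norm_smul, Real.norm_eq_abs, Real.norm_eq_abs,
            abs_of_pos hl0, abs_of_pos (by linarith : (0:ℝ) < 1 - lam)]
      _ ≤ lam * (L * ‖G x - G z‖) + (1 - lam) * ‖G x - G z‖ := by
          have := hD (G x) (G z)
          nlinarith [norm_nonneg (G x - G z)]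
      _ ≤ lam * (L * ‖x - z‖) + (1 - lam) * ‖x - z‖ := by
          have := hGne x z
          nlinarith
      _ = c * ‖x - z‖ := by ring
  refine ⟨⟨c, hc1, hTc⟩, ?_⟩
  have hcontr : ContractingWith ⟨c, hc0⟩ T := by
    constructor
    · exact_mod_cast hc1
    · apply LipschitzWith.of_dist_le_mul
      intro x z
      rw [dist_eq_norm, dist_eq_norm]
      exact hTc x z
  exact ⟨hcontr.fixedPoint T, hcontr.fixedPoint_isFixedPt,
    fun x hx => hcontr.fixedPoint_unique hx⟩
end

section
/- Let N(v) = Ω(λ·D(v) + (1-λ)·v) where D is L-Lipschitz with L < 1, λ ∈ (0,1), and Ω is nonexpansive, and let G(x) = x - 2s·Aᵀ(Ax - y) with 0 ≤ s ≤ 1/‖A‖². Then the HyDRA map x ↦ N(G(x)) is Lipschitz with constant at most λL + (1-λ), independent of y. -/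
theorem stmt17 {n m : ℕ}
    (A : EuclideanSpace ℝ (Fin n) →L[ℝ] EuclideanSpace ℝ (Fin m))
    (y : EuclideanSpace ℝ (Fin m))
    (s : ℝ) (hs0 : 0 ≤ s) (hs1 : s ≤ 1 / ‖A‖ ^ 2)
    (lam : ℝ) (hlam : lam ∈ Set.Ioo (0 : ℝ) 1)
    (D : EuclideanSpace ℝ (Fin n) → EuclideanSpace ℝ (Fin n))
    (L : ℝ) (hL0 : 0 ≤ L) (hL : L < 1)
    (hD : ∀ x z, ‖D x - D z‖ ≤ L * ‖x - z‖)
    (Ω : EuclideanSpace ℝ (Fin n) → EuclideanSpace ℝ (Fin n))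
    (hΩ : ∀ x z, ‖Ω x - Ω z‖ ≤ ‖x - z‖)
    (N : EuclideanSpace ℝ (Fin n) → EuclideanSpace ℝ (Fin n))
    (hN : ∀ v, N v = Ω (lam • D v + (1 - lam) • v))
    (G : EuclideanSpace ℝ (Fin n) → EuclideanSpace ℝ (Fin n))
    (hG : ∀ x, G x = x - (2 * s) • (ContinuousLinearMap.adjoint A) (A x - y)) :
    ∀ x z, ‖N (G x) - N (G z)‖ ≤ (lam * L + (1 - lam)) * ‖x - z‖ := by
  obtain ⟨hlam0, hlam1⟩ := hlam
  -- s * ‖A‖^2 ≤ 1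
  have hsA : s * ‖A‖ ^ 2 ≤ 1 := by
    rcases eq_or_lt_of_le (norm_nonneg A) with h | h
    · rw [← h]; simp
    · have h2 : (0:ℝ) < ‖A‖ ^ 2 := by positivity
      have := mul_le_mul_of_nonneg_right hs1 h2.le
      rwa [one_div, inv_mul_cancel₀ h2.ne'] at this
  -- G is nonexpansive
  have hGlip : ∀ x z, ‖G x - G z‖ ≤ ‖x - z‖ := by
    intro x z
    have hrw : G x - G z = (x - z) - (2 * s) • (ContinuousLinearMap.adjoint A) (A (x - z)) := by
      rw [hG, hG]
      simp only [map_sub, smul_sub]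
      abel
    rw [hrw]
    set v := x - z
    set T := (2 * s) • (ContinuousLinearMap.adjoint A) (A v) with hT
    have h1 : (inner ℝ v T : ℝ) = 2 * s * ‖A v‖ ^ 2 := by
      rw [hT, real_inner_smul_right, ContinuousLinearMap.adjoint_inner_right,
        real_inner_self_eq_norm_sq]
    have h2 : ‖T‖ ≤ 2 * s * (‖A‖ * ‖A v‖) := by
      rw [hT, norm_smul]
      have : ‖(ContinuousLinearMap.adjoint A) (A v)‖ ≤ ‖A‖ * ‖A v‖ := by
        calc ‖(ContinuousLinearMap.adjoint A) (A v)‖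
            ≤ ‖ContinuousLinearMap.adjoint A‖ * ‖A v‖ :=
              (ContinuousLinearMap.adjoint A).le_opNorm _
          _ = ‖A‖ * ‖A v‖ := by rw [ContinuousLinearMap.adjoint.norm_map A]
      calc ‖(2 * s : ℝ)‖ * ‖(ContinuousLinearMap.adjoint A) (A v)‖
          ≤ ‖(2 * s : ℝ)‖ * (‖A‖ * ‖A v‖) := by
            exact mul_le_mul_of_nonneg_left this (norm_nonneg _)
        _ = 2 * s * (‖A‖ * ‖A v‖) := by
            rw [Real.norm_eq_abs, abs_of_nonneg (by linarith)]
    have hsq : ‖v - T‖ ^ 2 ≤ ‖v‖ ^ 2 := by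
      have hexp : ‖v - T‖ ^ 2 = ‖v‖ ^ 2 - 2 * inner ℝ v T + ‖T‖ ^ 2 := by
        rw [@norm_sub_sq_real]
      rw [hexp, h1]
      have hT2 : ‖T‖ ^ 2 ≤ (2 * s * (‖A‖ * ‖A v‖)) ^ 2 :=
        pow_le_pow_left₀ (norm_nonneg _) h2 2
      have hkey : 4 * s * ‖A v‖ ^ 2 * (s * ‖A‖ ^ 2) ≤ 4 * s * ‖A v‖ ^ 2 * 1 :=
        mul_le_mul_of_nonneg_left hsA (by positivity)
      nlinarith [norm_nonneg (A v), norm_nonneg A]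
    have := Real.sqrt_le_sqrt hsq
    rwa [Real.sqrt_sq (norm_nonneg _), Real.sqrt_sq (norm_nonneg _)] at this
  -- N has Lipschitz constant lam*L + (1-lam)
  intro x z
  have hc0 : (0:ℝ) ≤ lam * L + (1 - lam) := by nlinarith
  calc ‖N (G x) - N (G z)‖
      ≤ ‖(lam • D (G x) + (1 - lam) • G x) - (lam • D (G z) + (1 - lam) • G z)‖ := by
        rw [hN, hN]; exact hΩ _ _
    _ = ‖lam • (D (G x) - D (G z)) + (1 - lam) • (G x - G z)‖ := by
        congr 1; simp only [smul_sub]; abel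
    _ ≤ ‖lam • (D (G x) - D (G z))‖ + ‖(1 - lam) • (G x - G z)‖ := norm_add_le _ _
    _ = lam * ‖D (G x) - D (G z)‖ + (1 - lam) * ‖G x - G z‖ := by
        rw [norm_smul, norm_smul, Real.norm_eq_abs, Real.norm_eq_abs,
          abs_of_nonneg hlam0.le, abs_of_nonneg (by linarith)]
    _ ≤ lam * (L * ‖G x - G z‖) + (1 - lam) * ‖G x - G z‖ := by
        have := hD (G x) (G z)
        nlinarith
    _ ≤ lam * (L * ‖x - z‖) + (1 - lam) * ‖x - z‖ := by
        have := hGlip x z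
        nlinarith
    _ = (lam * L + (1 - lam)) * ‖x - z‖ := by ring
end
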